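/- If there exist an ℓ-diagonal magic square of order n and an m-diagonal magic square of order n with ℓ + m ≤ n, then there exists an (ℓ+m)-diagonal magic square of order n. -/

import Mathlib

/-- An `n × n` partially filled array with entries `0,…,k*n-1` each occurring exactly once,
exactly `k` filled cells in each row and each column, and every row sum and column sum
equal to `S`. -/
def IsMagicWithSum (n k S : ℕ) (M : Fin n → Fin n → Option ℕ) : Prop :=
  (∀ e < k * n, ∃! p : Fin n × Fin n, M p.1 p.2 = some e) ∧
  (∀ i j : Fin n, ∀ e, M i j = some e → e < k * n) ∧
  (∀ i : Fin n, (Finset.univ.filter fun j => (M i j).isSome).card = k) ∧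
  (∀ j : Fin n, (Finset.univ.filter fun i => (M i j).isSome).card = k) ∧
  (∀ i : Fin n, ∑ j, (M i j).getD 0 = S) ∧
  (∀ j : Fin n, ∑ i, (M i j).getD 0 = S)

/-- A `k`-magic square of order `n`: some common magic sum works. -/
def IsKMagic (n k : ℕ) (M : Fin n → Fin n → Option ℕ) : Prop :=
  ∃ S, IsMagicWithSum n k S M

/-- All filled cells lie on `k` consecutive broken diagonals, i.e. there is a shift `d`
such that every filled cell `(i, j)` satisfies `j = (i + d + t) % n` for some `t < k`. -/
def IsKDiagonal (n k : ℕ) (M : Fin n → Fin n → Option ℕ) : Prop :=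
  ∃ d : ℕ, ∀ i j : Fin n, (M i j).isSome → ∃ t < k, (j : ℕ) = ((i : ℕ) + d + t) % n

/-- A `k`-diagonal magic square of order `n`. -/
def IsDiagonalMagic (n k : ℕ) (M : Fin n → Fin n → Option ℕ) : Prop :=
  IsKMagic n k M ∧ IsKDiagonal n k M

lemma val_addRight {n : ℕ} [NeZero n] (c : ℕ) (j : Fin n) :
    ((Equiv.addRight (Fin.ofNat n c) j : Fin n) : ℕ) = ((j:ℕ) + c) % n := by
  simp [Equiv.addRight, Fin.add_def, Fin.val_natCast, Nat.add_mod]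

lemma magic_reindex {n k S : ℕ} (σ : Fin n ≃ Fin n) (M : Fin n → Fin n → Option ℕ)
    (hM : IsMagicWithSum n k S M) :
    IsMagicWithSum n k S (fun i j => M i (σ j)) := by
  obtain ⟨h1, h2, h3, h4, h5, h6⟩ := hM
  refine ⟨?_, ?_, ?_, ?_, ?_, ?_⟩
  · intro e he
    obtain ⟨p, hp, hu⟩ := h1 e he
    refine ⟨(p.1, σ.symm p.2), by simpa using hp, ?_⟩
    rintro ⟨i, j⟩ h
    have h' := hu (i, σ j) h
    have h1' : i = p.1 := congrArg Prod.fst h'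
    have h2' : σ j = p.2 := congrArg Prod.snd h'
    simp [h1', ← h2']
  · intro i j e h; exact h2 i (σ j) e h
  · intro i
    rw [← h3 i]
    apply Finset.card_bij' (fun j _ => σ j) (fun j _ => σ.symm j) <;> simp
  · intro j; exact h4 (σ j)
  · intro i; rw [← h5 i]; exact Equiv.sum_comp σ (fun j => (M i j).getD 0)
  · intro j; exact h6 (σ j)

theorem diagonal_magic_add (n l m : ℕ) (hlm : l + m ≤ n)
    (hA : ∃ A : Fin n → Fin n → Option ℕ, IsDiagonalMagic n l A)
    (hB : ∃ B : Fin n → Fin n → Option ℕ, IsDiagonalMagic n m B) :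
    ∃ C : Fin n → Fin n → Option ℕ, IsDiagonalMagic n (l + m) C := by
  obtain ⟨A, ⟨⟨SA, hAm⟩, dA, hdA⟩⟩ := hA
  obtain ⟨B, ⟨⟨SB, hBm⟩, dB, hdB⟩⟩ := hB
  rcases Nat.eq_zero_or_pos n with hn | hn
  · subst hn
    refine ⟨fun _ _ => none, ⟨0, ?_, ?_, ?_, ?_, ?_, ?_⟩, 0, ?_⟩ <;>
      first
      | exact fun i => i.elim0
      | (intro e he; omega)
      | exact fun i j => i.elim0
  haveI : NeZero n := ⟨hn.ne'⟩
  have hl : l ≤ n := le_trans (Nat.le_add_right l m) hlm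
  set σA : Fin n ≃ Fin n := Equiv.addRight (Fin.ofNat n dA) with hσA
  set cB : ℕ := dB + (n - l) with hcB
  set σB : Fin n ≃ Fin n := Equiv.addRight (Fin.ofNat n cB) with hσB
  set A' : Fin n → Fin n → Option ℕ := fun i j => A i (σA j) with hA'def
  set B' : Fin n → Fin n → Option ℕ := fun i j => B i (σB j) with hB'def
  have hA'm : IsMagicWithSum n l SA A' := magic_reindex σA A hAm
  have hB'm : IsMagicWithSum n m SB B' := magic_reindex σB B hBm
  have hA'd : ∀ i j : Fin n, (A' i j).isSome → ∃ t < l, (j : ℕ) = ((i : ℕ) + t) % n := by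
    intro i j h
    obtain ⟨t, ht, hjt⟩ := hdA i (σA j) h
    rw [val_addRight] at hjt
    have hmod : (j : ℕ) % n = ((i : ℕ) + t) % n := by
      have h1 : ((j : ℕ) + dA) % n = (((i : ℕ) + t) + dA) % n := by
        rw [hjt]; ring_nf
      exact Nat.ModEq.add_right_cancel' dA h1
    exact ⟨t, ht, by rw [← hmod, Nat.mod_eq_of_lt j.isLt]⟩
  have hB'd : ∀ i j : Fin n, (B' i j).isSome → ∃ s < m, (j : ℕ) = ((i : ℕ) + (l + s)) % n := by
    intro i j h
    obtain ⟨s, hs, hjs⟩ := hdB i (σB j) h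
    rw [val_addRight] at hjs
    have key : ((j : ℕ) + dB) % n = (((i : ℕ) + (l + s)) + dB) % n := by
      have e1 : (j : ℕ) + cB + l = (j : ℕ) + dB + n := by
        simp only [hcB]; omega
      have h1 : ((j : ℕ) + cB + l) % n = (((i : ℕ) + dB + s) + l) % n :=
        Nat.ModEq.add_right l hjs
      rw [e1] at h1
      rw [← Nat.add_mod_right ((j : ℕ) + dB) n, h1]
      ring_nf
    have hmod := Nat.ModEq.add_right_cancel' dB key
    exact ⟨s, hs, by rw [← hmod, Nat.mod_eq_of_lt j.isLt]⟩
  have hdisj : ∀ i j : Fin n, (A' i j).isSome → (B' i j).isSome → False := by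
    intro i j ha hb
    obtain ⟨t, ht, hjt⟩ := hA'd i j ha
    obtain ⟨s, hs, hjs⟩ := hB'd i j hb
    have key : ((i : ℕ) + t) % n = ((i : ℕ) + (l + s)) % n := by rw [← hjt, ← hjs]
    have h2 : t % n = (l + s) % n := Nat.ModEq.add_left_cancel' (i : ℕ) key
    rw [Nat.mod_eq_of_lt (by omega), Nat.mod_eq_of_lt (by omega)] at h2
    omega
  have hAbd : ∀ i j e, A' i j = some e → e < l * n := fun i j e h => hA'm.2.1 i j e h
  have hBbd : ∀ i j e, B' i j = some e → e < m * n := fun i j e h => hB'm.2.1 i j e h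
  set C : Fin n → Fin n → Option ℕ :=
    fun i j => (A' i j).or ((B' i j).map (fun e => e + l * n)) with hCdef
  have hbnone : ∀ i j : Fin n, ∀ a, A' i j = some a → B' i j = none := by
    intro i j a ha
    cases hb' : B' i j with
    | none => rfl
    | some b => exact absurd (hdisj i j (by rw [ha]; rfl) (by rw [hb']; rfl)) not_false
  have hCsome : ∀ i j : Fin n, (C i j).isSome ↔ (A' i j).isSome ∨ (B' i j).isSome := by
    intro i j
    simp only [hCdef]
    cases A' i j <;> cases B' i j <;> simp
  have hCA : ∀ (i j : Fin n) (e : ℕ), e < l * n → (C i j = some e ↔ A' i j = some e) := by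
    intro i j e he
    simp only [hCdef]
    cases ha : A' i j with
    | some a => simp
    | none =>
      cases hb : B' i j with
      | none => simp
      | some b =>
        simp only [Option.map_some, Option.none_or, Option.some.injEq]
        constructor
        · intro h; omega
        · intro h; cases h
  have hCB : ∀ (i j : Fin n) (e : ℕ), (C i j = some (e + l * n) ↔ B' i j = some e) := by
    intro i j e
    simp only [hCdef]
    cases ha : A' i j with
    | some a =>
      have hbn : B' i j = none := hbnone i j a ha
      have halt : a < l * n := hAbd i j a ha
      simp only [hbn, Option.map_none, Option.or_none, Option.some.injEq]
      constructor
      · intro h; omega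
      · intro h; cases h
    | none =>
      cases hb : B' i j with
      | none => simp
      | some b =>
        simp only [Option.map_some, Option.none_or, Option.some.injEq]
        constructor
        · intro h; omega
        · intro h; cases h; rfl
  have hgetD : ∀ i j : Fin n,
      (C i j).getD 0 = (A' i j).getD 0 + ((B' i j).getD 0 +
        if (B' i j).isSome then l * n else 0) := by
    intro i j
    simp only [hCdef]
    cases ha : A' i j with
    | some a =>
      have hbn : B' i j = none := hbnone i j a ha
      simp [hbn]
    | none =>
      cases hb : B' i j <;> simp
  obtain ⟨hA1, hA2, hA3, hA4, hA5, hA6⟩ := hA'm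
  obtain ⟨hB1, hB2, hB3, hB4, hB5, hB6⟩ := hB'm
  refine ⟨C, ⟨SA + (SB + m * (l * n)), ?_, ?_, ?_, ?_, ?_, ?_⟩, ?_⟩
  · intro e he
    rcases lt_or_ge e (l * n) with hel | hel
    · obtain ⟨p, hp, hu⟩ := hA1 e hel
      exact ⟨p, (hCA p.1 p.2 e hel).2 hp,
        fun q hq => hu q ((hCA q.1 q.2 e hel).1 hq)⟩
    · have hlmn : (l + m) * n = l * n + m * n := by ring
      have he' : e - l * n < m * n := by omega
      obtain ⟨p, hp, hu⟩ := hB1 (e - l * n) he'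
      have hee : e - l * n + l * n = e := by omega
      refine ⟨p, ?_, ?_⟩
      · have := (hCB p.1 p.2 (e - l * n)).2 hp
        rwa [hee] at this
      · intro q hq
        apply hu
        rw [← hCB q.1 q.2 (e - l * n)]
        rwa [hee]
  · intro i j e h
    have hlmn : (l + m) * n = l * n + m * n := by ring
    rcases lt_or_ge e (l * n) with hel | hel
    · omega
    · have hb := (hCB i j (e - l * n)).1 (by rwa [Nat.sub_add_cancel hel])
      have := hBbd i j _ hb
      omega
  · intro i
    have hsplit : (Finset.univ.filter fun j => (C i j).isSome) =
        (Finset.univ.filter fun j => (A' i j).isSome) ∪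
        (Finset.univ.filter fun j => (B' i j).isSome) := by
      ext j; simp [hCsome i j]
    rw [hsplit, Finset.card_union_of_disjoint, hA3 i, hB3 i]
    rw [Finset.disjoint_filter]
    intro j _ ha hb
    exact hdisj i j ha hb
  · intro j
    have hsplit : (Finset.univ.filter fun i => (C i j).isSome) =
        (Finset.univ.filter fun i => (A' i j).isSome) ∪
        (Finset.univ.filter fun i => (B' i j).isSome) := by
      ext i; simp [hCsome i j]
    rw [hsplit, Finset.card_union_of_disjoint, hA4 j, hB4 j]
    rw [Finset.disjoint_filter]
    intro i _ ha hb
    exact hdisj i j ha hb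
  · intro i
    calc ∑ j, (C i j).getD 0
        = ∑ j, ((A' i j).getD 0 + ((B' i j).getD 0 +
            if (B' i j).isSome then l * n else 0)) :=
          Finset.sum_congr rfl fun j _ => hgetD i j
      _ = (∑ j, (A' i j).getD 0) + ((∑ j, (B' i j).getD 0) +
            ∑ j, if (B' i j).isSome then l * n else 0) := by
          rw [Finset.sum_add_distrib, Finset.sum_add_distrib]
      _ = SA + (SB + m * (l * n)) := by
          rw [hA5 i, hB5 i, ← Finset.sum_filter, Finset.sum_const, smul_eq_mul, hB3 i]
  · intro j
    calc ∑ i, (C i j).getD 0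
        = ∑ i, ((A' i j).getD 0 + ((B' i j).getD 0 +
            if (B' i j).isSome then l * n else 0)) :=
          Finset.sum_congr rfl fun i _ => hgetD i j
      _ = (∑ i, (A' i j).getD 0) + ((∑ i, (B' i j).getD 0) +
            ∑ i, if (B' i j).isSome then l * n else 0) := by
          rw [Finset.sum_add_distrib, Finset.sum_add_distrib]
      _ = SA + (SB + m * (l * n)) := by
          rw [hA6 j, hB6 j, ← Finset.sum_filter, Finset.sum_const, smul_eq_mul, hB4 j]
  · refine ⟨0, ?_⟩
    intro i j h
    rw [hCsome i j] at h
    rcases h with h | h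
    · obtain ⟨t, ht, hjt⟩ := hA'd i j h
      exact ⟨t, by omega, by rw [hjt]; ring_nf⟩
    · obtain ⟨s, hs, hjs⟩ := hB'd i j h
      exact ⟨l + s, by omega, by rw [hjs]; ring_nf⟩
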